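/- Let p > 0, b > 0, and λ ∈ ℝ. Then for every z > 0, the derivative of z ↦ z^λ E^λ_{p,b}(−z) equals λ z^{λ−1} E^{λ+1}_{p,b}(−z). -/

import Mathlib

open Real Filter Set Polynomial

/-- From log-convexity of `Γ`: for `x ≥ 2` and `p > 0`, `Γ(x) * (x-1)^p ≤ Γ(x+p)`. -/
lemma gamma_mul_rpow_le (p : ℝ) (hp : 0 < p) {x : ℝ} (hx : 2 ≤ x) :
    Real.Gamma x * (x - 1) ^ p ≤ Real.Gamma (x + p) := by
  have hx1 : (0:ℝ) < x - 1 := by linarith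
  have hx0 : (0:ℝ) < x := by linarith
  have hxp : (0:ℝ) < x + p := by linarith
  have hΓx : 0 < Real.Gamma x := Real.Gamma_pos_of_pos hx0
  have hΓx1 : 0 < Real.Gamma (x - 1) := Real.Gamma_pos_of_pos hx1
  have hΓxp : 0 < Real.Gamma (x + p) := Real.Gamma_pos_of_pos hxp
  have hΓeq : Real.Gamma x = (x - 1) * Real.Gamma (x - 1) := by
    have h := Real.Gamma_add_one (ne_of_gt hx1)
    rw [sub_add_cancel] at h
    exact h
  have hslope := Real.convexOn_log_Gamma.slope_mono_adjacent
    (Set.mem_Ioi.mpr hx1) (Set.mem_Ioi.mpr hxp)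
    (show x - 1 < x by linarith) (show x < x + p by linarith)
  simp only [Function.comp] at hslope
  have h1 : (Real.log (Real.Gamma x) - Real.log (Real.Gamma (x - 1))) / (x - (x - 1))
      = Real.log (x - 1) := by
    rw [hΓeq, Real.log_mul (ne_of_gt hx1) (ne_of_gt hΓx1)]
    field_simp
    ring
  rw [h1] at hslope
  have h2 : Real.log (Real.Gamma x * (x - 1) ^ p) ≤ Real.log (Real.Gamma (x + p)) := by
    rw [Real.log_mul (ne_of_gt hΓx) (by positivity), Real.log_rpow hx1]
    have hxx : x + p - x = p := by ring
    rw [hxx] at hslope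
    have h3 := (le_div_iff₀ hp).mp hslope
    linarith
  exact (Real.log_le_log_iff (by positivity) hΓxp).mp h2

/-- Master summability lemma for Mittag-Leffler type series. -/
lemma mittag_aux_summable (p b lam R : ℝ) (hp : 0 < p) (hb : 0 < b) (hR : 0 < R) :
    Summable (fun n : ℕ => (1 + (n:ℝ)) * |(ascPochhammer ℝ n).eval lam| * R ^ n /
      (Real.Gamma (p * n + b) * (Nat.factorial n : ℝ))) := by
  have hpos : ∀ n : ℕ, (0:ℝ) < p * n + b := fun n => by
    have := mul_nonneg hp.le (Nat.cast_nonneg (α := ℝ) n); linarith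
  apply summable_of_ratio_norm_eventually_le (r := 1/2) (by norm_num)
  have t1 : Tendsto (fun n : ℕ => p * (n:ℝ) + b) atTop atTop := by
    apply tendsto_atTop_add_const_right
    exact (tendsto_natCast_atTop_atTop (R := ℝ)).const_mul_atTop hp
  have t2 : Tendsto (fun n : ℕ => (p * (n:ℝ) + b - 1) ^ p) atTop atTop := by
    apply (tendsto_rpow_atTop hp).comp
    exact (tendsto_atTop_add_const_right _ (-1) t1).congr (fun n => by ring)
  filter_upwards [t1.eventually_ge_atTop 2, t2.eventually_ge_atTop (4 * R * (1 + |lam|))]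
    with n h2 hQ
  have hG : 0 < Real.Gamma (p * n + b) := Real.Gamma_pos_of_pos (hpos n)
  have hG' : 0 < Real.Gamma (p * (n + 1 : ℕ) + b) := Real.Gamma_pos_of_pos (hpos (n+1))
  have hQ0 : 0 < (p * (n:ℝ) + b - 1) ^ p := Real.rpow_pos_of_pos (by linarith) p
  have hF : (0:ℝ) < (Nat.factorial n : ℝ) := by exact_mod_cast Nat.factorial_pos n
  have hF' : (0:ℝ) < (Nat.factorial (n+1) : ℝ) := by exact_mod_cast Nat.factorial_pos (n+1)
  have hGG' : Real.Gamma (p * n + b) * (p * (n:ℝ) + b - 1) ^ p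
      ≤ Real.Gamma (p * (n + 1 : ℕ) + b) := by
    have h := gamma_mul_rpow_le p hp h2
    have heq : p * (((n:ℕ):ℝ) + 1) + b = (p * n + b) + p := by ring
    push_cast
    rw [heq]
    exact h
  have hnonneg1 : 0 ≤ (1 + ((n+1 : ℕ):ℝ)) * |(ascPochhammer ℝ (n+1)).eval lam| * R ^ (n+1) /
      (Real.Gamma (p * (n+1 : ℕ) + b) * (Nat.factorial (n+1) : ℝ)) := by
    apply div_nonneg (by positivity)
    exact mul_nonneg hG'.le hF'.le
  have hnonneg2 : 0 ≤ (1 + (n:ℝ)) * |(ascPochhammer ℝ n).eval lam| * R ^ n /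
      (Real.Gamma (p * n + b) * (Nat.factorial n : ℝ)) := by
    apply div_nonneg (by positivity)
    exact mul_nonneg hG.le hF.le
  rw [Real.norm_eq_abs, Real.norm_eq_abs, abs_of_nonneg hnonneg1, abs_of_nonneg hnonneg2]
  have hP : |(ascPochhammer ℝ (n+1)).eval lam|
      = |(ascPochhammer ℝ n).eval lam| * |lam + n| := by
    rw [ascPochhammer_succ_eval, abs_mul]
  set Q : ℝ := (p * (n:ℝ) + b - 1) ^ p with hQdef
  calc (1 + ((n+1 : ℕ):ℝ)) * |(ascPochhammer ℝ (n+1)).eval lam| * R ^ (n+1) /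
        (Real.Gamma (p * (n+1 : ℕ) + b) * (Nat.factorial (n+1) : ℝ))
      ≤ (1 + ((n+1 : ℕ):ℝ)) * |(ascPochhammer ℝ (n+1)).eval lam| * R ^ (n+1) /
        ((Real.Gamma (p * n + b) * Q) * (Nat.factorial (n+1) : ℝ)) := by
        apply div_le_div_of_nonneg_left (by positivity)
          (by positivity)
        exact mul_le_mul_of_nonneg_right hGG' hF'.le
    _ ≤ 1/2 * ((1 + (n:ℝ)) * |(ascPochhammer ℝ n).eval lam| * R ^ n /
        (Real.Gamma (p * n + b) * (Nat.factorial n : ℝ))) := by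
        rw [hP]
        have hfact : ((Nat.factorial (n+1) : ℝ)) = ((n:ℝ)+1) * (Nat.factorial n : ℝ) := by
          rw [Nat.factorial_succ]; push_cast; ring
        rw [hfact]
        rw [show (1/2 : ℝ) * ((1 + (n:ℝ)) * |(ascPochhammer ℝ n).eval lam| * R ^ n /
            (Real.Gamma (p * n + b) * (Nat.factorial n : ℝ)))
          = (1 + (n:ℝ)) * |(ascPochhammer ℝ n).eval lam| * R ^ n /
            (2 * (Real.Gamma (p * n + b) * (Nat.factorial n : ℝ))) by ring]
        rw [div_le_div_iff₀ (by positivity) (by positivity)]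
        push_cast
        rw [pow_succ]
        have hl : |lam + (n:ℝ)| ≤ (1 + |lam|) * (1 + (n:ℝ)) := by
          have h1 : |lam + (n:ℝ)| ≤ |lam| + (n:ℝ) := by
            calc |lam + (n:ℝ)| ≤ |lam| + |(n:ℝ)| := abs_add_le _ _
              _ = |lam| + (n:ℝ) := by rw [Nat.abs_cast]
          nlinarith [abs_nonneg lam, Nat.cast_nonneg (α := ℝ) n]
        have e1 : (1 + ((n:ℝ) + 1)) * |lam + (n:ℝ)| * R * 2
            ≤ (1 + (n:ℝ)) * ((1 + (n:ℝ)) * Q) := by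
          calc (1 + ((n:ℝ) + 1)) * |lam + (n:ℝ)| * R * 2
              ≤ (2 * (1 + (n:ℝ))) * ((1 + |lam|) * (1 + (n:ℝ))) * R * 2 := by
                gcongr
                all_goals first
                  | exact abs_nonneg _
                  | linarith [Nat.cast_nonneg (α := ℝ) n]
            _ = (1 + (n:ℝ)) * ((1 + (n:ℝ)) * (4 * R * (1 + |lam|))) := by ring
            _ ≤ (1 + (n:ℝ)) * ((1 + (n:ℝ)) * Q) := by
                gcongr <;> linarith [Nat.cast_nonneg (α := ℝ) n]
        calc (1 + ((n:ℝ) + 1)) * (|(ascPochhammer ℝ n).eval lam| * |lam + (n:ℝ)|) *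
              (R ^ n * R) * (2 * (Real.Gamma (p * n + b) * (Nat.factorial n : ℝ)))
            = (|(ascPochhammer ℝ n).eval lam| * R ^ n * Real.Gamma (p * n + b) *
              (Nat.factorial n : ℝ)) * ((1 + ((n:ℝ) + 1)) * |lam + (n:ℝ)| * R * 2) := by ring
          _ ≤ (|(ascPochhammer ℝ n).eval lam| * R ^ n * Real.Gamma (p * n + b) *
              (Nat.factorial n : ℝ)) * ((1 + (n:ℝ)) * ((1 + (n:ℝ)) * Q)) := by
              apply mul_le_mul_of_nonneg_left e1
              have := mul_nonneg (mul_nonneg (mul_nonneg (abs_nonneg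
                ((ascPochhammer ℝ n).eval lam)) (pow_nonneg hR.le n)) hG.le) hF.le
              exact this
          _ = (1 + (n:ℝ)) * |(ascPochhammer ℝ n).eval lam| * R ^ n *
              (Real.Gamma (p * n + b) * Q * (((n:ℝ) + 1) * (Nat.factorial n : ℝ))) := by ring

/-- The generalized Mittag-Leffler function
`E^λ_{p,b}(z) = Σ_{k=0}^∞ (λ)_k z^k / (Γ(pk+b) k!)`, where `(λ)_k` is the rising
factorial. -/
noncomputable def genMittagLeffler (p b lam z : ℝ) : ℝ :=
  ∑' k : ℕ, (ascPochhammer ℝ k).eval lam * z ^ k /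
    (Real.Gamma (p * k + b) * (Nat.factorial k : ℝ))

/-- For `p > 0`, `b > 0`, real `λ`, and `z > 0`, the derivative of
`z ↦ z^λ E^λ_{p,b}(−z)` equals `λ z^(λ−1) E^{λ+1}_{p,b}(−z)`. -/
theorem genMittagLeffler_rpow_mul_deriv (p b lam : ℝ) (hp : 0 < p) (hb : 0 < b)
    (z : ℝ) (hz : 0 < z) :
    deriv (fun z : ℝ => z ^ lam * genMittagLeffler p b lam (-z)) z
      = lam * z ^ (lam - 1) * genMittagLeffler p b (lam + 1) (-z) := by
  have hz2 : (0:ℝ) < 2 * z := by linarith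
  set M : ℝ := max ((z/2) ^ (lam-1)) ((2*z) ^ (lam-1)) with hM
  have hM0 : 0 ≤ M := le_trans (Real.rpow_nonneg (by linarith) _) (le_max_left _ _)
  set D : ℕ → ℝ := fun n => Real.Gamma (p * n + b) * (Nat.factorial n : ℝ) with hD
  have hDpos : ∀ n : ℕ, 0 < D n := fun n => by
    apply mul_pos (Real.Gamma_pos_of_pos ?_) (by exact_mod_cast Nat.factorial_pos n)
    have := mul_nonneg hp.le (Nat.cast_nonneg (α := ℝ) n); linarith
  set g : ℕ → ℝ → ℝ := fun n x => x ^ lam *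
    ((ascPochhammer ℝ n).eval lam * (-x) ^ n / D n) with hgdef
  set g' : ℕ → ℝ → ℝ := fun n x =>
    ((ascPochhammer ℝ n).eval lam * (-1 : ℝ) ^ n / D n) *
      ((lam + n) * x ^ (lam + n - 1)) with hg'def
  set u : ℕ → ℝ := fun n => ((1 + |lam|) * M) *
    ((1 + (n:ℝ)) * |(ascPochhammer ℝ n).eval lam| * (2*z) ^ n / D n) with hudef
  have hu_sum : Summable u := (mittag_aux_summable p b lam (2*z) hp hb hz2).mul_left _
  have hzt : z ∈ Set.Ioo (z/2) (2*z) := ⟨by linarith, by linarith⟩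
  have htpos : ∀ x ∈ Set.Ioo (z/2) (2*z), (0:ℝ) < x := fun x hx => lt_trans (by linarith) hx.1
  -- derivative of each term
  have hderiv : ∀ n : ℕ, ∀ x ∈ Set.Ioo (z/2) (2*z), HasDerivAt (g n) (g' n x) x := by
    intro n x hx
    have hx0 : 0 < x := htpos x hx
    have h1 : HasDerivAt (fun y : ℝ => ((ascPochhammer ℝ n).eval lam * (-1:ℝ)^n / D n) *
        y ^ (lam + n)) (g' n x) x := by
      have h := (Real.hasDerivAt_rpow_const (p := lam + n)
        (Or.inl (ne_of_gt hx0))).const_mul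
        ((ascPochhammer ℝ n).eval lam * (-1:ℝ)^n / D n)
      exact h
    apply h1.congr_of_eventuallyEq
    filter_upwards [eventually_gt_nhds hx0] with y hy
    simp only [hgdef]
    rw [Real.rpow_add hy, Real.rpow_natCast, neg_pow]
    ring
  -- bound on the derivatives
  have hbound : ∀ n : ℕ, ∀ x ∈ Set.Ioo (z/2) (2*z), ‖g' n x‖ ≤ u n := by
    intro n x hx
    have hx0 : 0 < x := htpos x hx
    have hxle : x ≤ 2*z := le_of_lt hx.2
    have hxge : z/2 ≤ x := le_of_lt hx.1
    have hxl : x ^ (lam - 1) ≤ M := by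
      rcases le_or_gt 0 (lam - 1) with h | h
      · exact le_trans (Real.rpow_le_rpow hx0.le hxle h) (le_max_right _ _)
      · exact le_trans (Real.rpow_le_rpow_of_nonpos (by linarith) hxge h.le) (le_max_left _ _)
    have hxn : x ^ (lam + (n:ℝ) - 1) = x ^ (lam - 1) * x ^ n := by
      rw [← Real.rpow_natCast x n, ← Real.rpow_add hx0]
      ring_nf
    have h1 : ‖g' n x‖ = (|(ascPochhammer ℝ n).eval lam| / D n) *
        (|lam + (n:ℝ)| * (x ^ (lam - 1) * x ^ n)) := by
      simp only [hg'def]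
      rw [Real.norm_eq_abs, abs_mul, abs_div, abs_mul, abs_pow, abs_neg, abs_one, one_pow,
        mul_one, abs_of_pos (hDpos n), abs_mul, hxn,
        abs_of_nonneg (mul_nonneg (Real.rpow_nonneg hx0.le _) (pow_nonneg hx0.le _))]
    rw [h1]
    have hl : |lam + (n:ℝ)| ≤ (1 + |lam|) * (1 + (n:ℝ)) := by
      have h2 : |lam + (n:ℝ)| ≤ |lam| + (n:ℝ) := by
        calc |lam + (n:ℝ)| ≤ |lam| + |(n:ℝ)| := abs_add_le _ _
          _ = |lam| + (n:ℝ) := by rw [Nat.abs_cast]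
      nlinarith [abs_nonneg lam, Nat.cast_nonneg (α := ℝ) n]
    calc (|(ascPochhammer ℝ n).eval lam| / D n) *
          (|lam + (n:ℝ)| * (x ^ (lam - 1) * x ^ n))
        ≤ (|(ascPochhammer ℝ n).eval lam| / D n) *
          (((1 + |lam|) * (1 + (n:ℝ))) * (M * (2*z) ^ n)) := by
          gcongr
          all_goals first
            | exact div_nonneg (abs_nonneg _) (hDpos n).le
            | exact Real.rpow_nonneg hx0.le _
            | exact hx0.le
            | exact hxl
            | exact hl
            | exact pow_le_pow_left₀ hx0.le hxle n
            | positivity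
      _ = u n := by
          simp only [hudef]
          ring
  -- summability at z
  have hw : Summable (fun n : ℕ => (ascPochhammer ℝ n).eval lam * (-z) ^ n / D n) := by
    apply Summable.of_norm_bounded (mittag_aux_summable p b lam (2*z) hp hb hz2)
    intro n
    rw [Real.norm_eq_abs, abs_div, abs_mul, abs_pow, abs_neg, abs_of_pos hz,
      abs_of_pos (hDpos n)]
    have hnum : |(ascPochhammer ℝ n).eval lam| * z ^ n
        ≤ (1 + (n:ℝ)) * |(ascPochhammer ℝ n).eval lam| * (2*z) ^ n := by
      calc |(ascPochhammer ℝ n).eval lam| * z ^ n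
          ≤ |(ascPochhammer ℝ n).eval lam| * (2*z) ^ n := by
            gcongr
            all_goals first
              | exact abs_nonneg _
              | linarith
        _ ≤ (1 + (n:ℝ)) * |(ascPochhammer ℝ n).eval lam| * (2*z) ^ n := by
            have h := mul_nonneg (abs_nonneg ((ascPochhammer ℝ n).eval lam))
              (pow_nonneg hz2.le n)
            nlinarith [Nat.cast_nonneg (α := ℝ) n]
    exact div_le_div_of_nonneg_right hnum (hDpos n).le
  have hg0 : Summable (fun n : ℕ => g n z) := by
    simp only [hgdef]
    exact hw.mul_left _
  have key : HasDerivAt (fun y : ℝ => ∑' n, g n y) (∑' n, g' n z) z :=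
    hasDerivAt_tsum_of_isPreconnected hu_sum isOpen_Ioo (convex_Ioo _ _).isPreconnected
      hderiv hbound hzt hg0 hzt
  have hfun : (fun y : ℝ => y ^ lam * genMittagLeffler p b lam (-y))
      = (fun y : ℝ => ∑' n, g n y) := by
    funext y
    simp only [hgdef, genMittagLeffler, hD]
    rw [tsum_mul_left]
  rw [hfun, key.deriv]
  simp only [genMittagLeffler]
  rw [← tsum_mul_left]
  apply tsum_congr
  intro n
  have hasc : lam * (ascPochhammer ℝ n).eval (lam+1)
      = (ascPochhammer ℝ n).eval lam * (lam + n) := by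
    have h1 : (ascPochhammer ℝ (n+1)).eval lam
        = lam * (ascPochhammer ℝ n).eval (lam+1) := by
      rw [ascPochhammer_succ_left, Polynomial.eval_mul, Polynomial.eval_X,
        Polynomial.eval_comp, Polynomial.eval_add, Polynomial.eval_X, Polynomial.eval_one]
    rw [← h1, ascPochhammer_succ_eval]
  have hzz : z ^ (lam + (n:ℝ) - 1) = z ^ (lam - 1) * z ^ n := by
    rw [← Real.rpow_natCast z n, ← Real.rpow_add hz]
    ring_nf
  simp only [hg'def, hD]
  rw [hzz, neg_pow]
  have hDn : Real.Gamma (p * n + b) * (Nat.factorial n : ℝ) ≠ 0 := ne_of_gt (hDpos n)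
  linear_combination (-((-1:ℝ)^n * z^(lam-1) * z^n /
    (Real.Gamma (p * n + b) * (Nat.factorial n : ℝ)))) * hasc
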